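/- Let W be a closed walk in a digraph that uses every arc exactly once (an Eulerian circuit) starting at vertex r, and for each vertex v ≠ r let e_v be the last arc of W with tail v. Then the walk starting at r that at each vertex takes an unvisited arc distinct from e_v whenever possible (taking e_v only when all other outgoing arcs of v are used) is itself an Eulerian circuit. -/

import Mathlib

open List in
/-- Balance count along a chain (walk): out-count plus end-indicator equals in-count plus
start-indicator at every vertex. -/
lemma walk_count_bal {V E : Type*} [DecidableEq V] (tl hd : E → V) (v : V) :
    ∀ (es : List E), es ≠ [] → List.Chain' (fun a b => hd a = tl b) es →
      ∀ a b : V, es.head?.map tl = some a → es.getLast?.map hd = some b →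
      es.countP (fun x => tl x = v) + (if b = v then 1 else 0)
        = es.countP (fun x => hd x = v) + (if a = v then 1 else 0)
  | [], h, _, _, _, _, _ => absurd rfl h
  | [e], _, _, a, b, ha, hb => by
    simp only [head?_cons, getLast?_singleton, Option.map_some, Option.some.injEq] at ha hb
    subst ha; subst hb
    simp [countP_cons]
    omega
  | e :: e' :: l, _, hc, a, b, ha, hb => by
    have h1 : hd e = tl e' := by
      rw [Chain', isChain_cons_cons] at hc; exact hc.1
    have IH := walk_count_bal tl hd v (e' :: l) (by simp) (by rw [Chain', isChain_cons_cons] at hc; exact hc.2)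
      (tl e') b (by simp) (by rwa [getLast?_cons_cons] at hb)
    simp only [head?_cons, Option.map_some, Option.some.injEq] at ha
    subst ha
    simp only [countP_cons, decide_eq_true_eq] at IH ⊢
    rw [h1]
    omega

open List in
lemma countP_le_of_forall_mem' {E : Type*} {es es₀ : List E} (h₀nodup : es₀.Nodup)
    (P : E → Bool) (h : ∀ e ∈ es₀, P e → e ∈ es) : es₀.countP P ≤ es.countP P := by
  rw [countP_eq_length_filter, countP_eq_length_filter]
  exact (List.subperm_of_subset ((List.Nodup.filter P) h₀nodup)
    (fun e he => mem_filter.2 ⟨h e (mem_of_mem_filter he) (of_mem_filter he), of_mem_filter he⟩)).length_le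

open List in
lemma mem_of_countP_ge' {E : Type*} {es es₀ : List E} (hsub : es.Subperm es₀)
    (P : E → Bool) (hcnt : es₀.countP P ≤ es.countP P) : ∀ e ∈ es₀, P e → e ∈ es := by
  have hf := hsub.filter P
  have hperm : es₀.filter P ~ es.filter P :=
    (hf.perm_of_length_le (by
      rw [← countP_eq_length_filter, ← countP_eq_length_filter]; exact hcnt)).symm
  intro e he hp
  exact mem_of_mem_filter (hperm.mem_iff.1 (mem_filter.2 ⟨he, hp⟩))

/-- Converse direction of the BEST correspondence. Let `es₀` be an Eulerian circuit of a
digraph starting (and ending) at `r`, and for each vertex `v ≠ r` let `f v` be the last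
arc of `es₀` with tail `v`. Then any walk starting at `r` that uses `f v` at a vertex `v`
only when all other outgoing arcs of `v` have been used (never repeating an arc, and
stopping only when the current vertex has no unvisited outgoing arc) is itself an
Eulerian circuit: it uses every arc and ends at `r`. -/
theorem walk_avoiding_lastArc_tree_is_eulerian {V E : Type*}
    [Fintype V] [Fintype E] [DecidableEq V] [DecidableEq E]
    (tl hd : E → V) (r : V)
    -- es₀ is an Eulerian circuit starting and ending at r
    (es₀ : List E)
    (h₀ne : es₀ ≠ [])
    (h₀start : es₀.head?.map tl = some r)
    (h₀end : es₀.getLast?.map hd = some r)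
    (h₀chain : List.Chain' (fun e f => hd e = tl f) es₀)
    (h₀nodup : es₀.Nodup)
    (h₀all : ∀ e : E, e ∈ es₀)
    -- f v is the last arc of es₀ with tail v, for v ≠ r
    (f : V → E)
    (hf : ∀ v : V, v ≠ r → tl (f v) = v ∧
      ∀ e ∈ es₀, tl e = v → es₀.idxOf e ≤ es₀.idxOf (f v))
    -- es is a walk starting at r ...
    (es : List E)
    (hstart : es = [] ∨ es.head?.map tl = some r)
    (hchain : List.Chain' (fun e f => hd e = tl f) es)
    -- ... never repeating an arc ...
    (hnodup : es.Nodup)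
    -- ... using the arc f v at a vertex v ≠ r only when every other outgoing arc of v
    -- has already been used ...
    (havoid : ∀ i (hi : i < es.length), tl (es.get ⟨i, hi⟩) ≠ r →
      es.get ⟨i, hi⟩ = f (tl (es.get ⟨i, hi⟩)) →
      ∀ e : E, tl e = tl (es.get ⟨i, hi⟩) → e ≠ es.get ⟨i, hi⟩ → e ∈ es.take i)
    -- ... and stopping only when every outgoing arc of the final vertex has been used
    (hstop : ∀ e : E, tl e = ((es.getLast?.map hd).getD r) → e ∈ es) :
    (∀ e : E, e ∈ es) ∧ (es ≠ [] → es.getLast?.map hd = some r) := by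
  classical
  obtain ⟨e₀, he₀⟩ : ∃ e, es₀.head? = some e := by
    cases es₀ with
    | nil => exact absurd rfl h₀ne
    | cons a l => exact ⟨a, rfl⟩
  have he₀tl : tl e₀ = r := by rw [he₀] at h₀start; simpa using h₀start
  -- the walk es is nonempty
  have hes_ne : es ≠ [] := by
    intro h
    subst h
    have := hstop e₀ (by simp [he₀tl])
    simp at this
  have haStart : es.head?.map tl = some r := hstart.resolve_left hes_ne
  have hsub : List.Subperm es es₀ := List.subperm_of_subset hnodup (fun e _ => h₀all e)
  -- degree balance around es₀
  have bal₀ : ∀ v, es₀.countP (fun x => tl x = v) = es₀.countP (fun x => hd x = v) := by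
    intro v
    have := walk_count_bal tl hd v es₀ h₀ne h₀chain r r h₀start h₀end
    omega
  -- the walk ends at r
  have hbr : hd (es.getLast hes_ne) = r := by
    by_contra hbne
    have hballout : ∀ e, tl e = hd (es.getLast hes_ne) → e ∈ es := by
      intro e he
      exact hstop e (by rw [List.getLast?_eq_getLast_of_ne_nil hes_ne]; simpa using he)
    have h1 : es₀.countP (fun x => tl x = hd (es.getLast hes_ne))
        ≤ es.countP (fun x => tl x = hd (es.getLast hes_ne)) :=
      countP_le_of_forall_mem' h₀nodup _ (fun e _ hp => hballout e (of_decide_eq_true hp))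
    have h2 := walk_count_bal tl hd (hd (es.getLast hes_ne)) es hes_ne hchain
      r (hd (es.getLast hes_ne)) haStart
      (by rw [List.getLast?_eq_getLast_of_ne_nil hes_ne]; rfl)
    rw [if_pos rfl, if_neg (fun h => hbne h.symm)] at h2
    have h3 : es.countP (fun x => hd x = hd (es.getLast hes_ne))
        ≤ es₀.countP (fun x => hd x = hd (es.getLast hes_ne)) := hsub.countP_le _
    have h4 := bal₀ (hd (es.getLast hes_ne))
    omega
  have hendlast : es.getLast?.map hd = some r := by
    rw [List.getLast?_eq_getLast_of_ne_nil hes_ne]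
    simpa using hbr
  -- degree balance around es
  have bal_es : ∀ v, es.countP (fun x => tl x = v) = es.countP (fun x => hd x = v) := by
    intro v
    have := walk_count_bal tl hd v es hes_ne hchain r r haStart hendlast
    omega
  have hAllOut_r : ∀ e, tl e = r → e ∈ es := by
    intro e he
    exact hstop e (by rw [hendlast]; simpa using he)
  -- if all out-arcs of v are used, all in-arcs of v are used
  have claimC' : ∀ v, (∀ e, tl e = v → e ∈ es) → ∀ e, hd e = v → e ∈ es := by
    intro v hv e he
    have h1 : es₀.countP (fun x => tl x = v) ≤ es.countP (fun x => tl x = v) :=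
      countP_le_of_forall_mem' h₀nodup _ (fun e _ hp => hv e (of_decide_eq_true hp))
    have h2 := bal₀ v
    have h3 := bal_es v
    have h4 := hsub.countP_le (fun x => hd x = v)
    exact mem_of_countP_ge' hsub (fun x => decide (hd x = v)) (by omega) e (h₀all e) (decide_eq_true he)
  have hAllIn_r : ∀ e, hd e = r → e ∈ es := claimC' r hAllOut_r
  have claimC : ∀ v, (∃ e, hd e = v ∧ e ∉ es) → ∃ e, tl e = v ∧ e ∉ es := by
    rintro v ⟨e, he, hne⟩
    by_contra h
    push_neg at h
    exact hne (claimC' v h e he)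
  -- if some out-arc of v ≠ r is unused, then f v is unused
  have claimB : ∀ v, v ≠ r → (∃ e, tl e = v ∧ e ∉ es) → f v ∉ es := by
    rintro v hv ⟨e, he, hne⟩ hfv
    have hi : es.idxOf (f v) < es.length := List.idxOf_lt_length_iff.2 hfv
    have hget : es.get ⟨es.idxOf (f v), hi⟩ = f v := List.idxOf_get hi
    have h1 : tl (es.get ⟨es.idxOf (f v), hi⟩) ≠ r := by
      rw [hget, (hf v hv).1]; exact hv
    have h2 : es.get ⟨es.idxOf (f v), hi⟩ = f (tl (es.get ⟨es.idxOf (f v), hi⟩)) := by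
      rw [hget, (hf v hv).1]
    have h3 := havoid _ hi h1 h2 e (by rw [hget, (hf v hv).1]; exact he)
      (fun hh => hne (by rw [hh, hget]; exact hfv))
    exact hne (List.take_subset _ _ h3)
  -- walking up the arborescence from an unused tree arc
  have key : ∀ n (v : V), v ≠ r → f v ∉ es → es₀.length - es₀.idxOf (f v) ≤ n → False := by
    intro n
    induction n with
    | zero =>
      intro v hv hfv hle
      have : es₀.idxOf (f v) < es₀.length := List.idxOf_lt_length_iff.2 (h₀all _)
      omega
    | succ n ih =>
      intro v hv hfv hle
      have hwr : hd (f v) ≠ r := fun h => hfv (hAllIn_r _ h)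
      obtain ⟨e, he, hne⟩ := claimC (hd (f v)) ⟨f v, rfl, hfv⟩
      have hfw : f (hd (f v)) ∉ es := claimB _ hwr ⟨e, he, hne⟩
      have hi : es₀.idxOf (f v) < es₀.length := List.idxOf_lt_length_iff.2 (h₀all _)
      have hget : es₀.get ⟨es₀.idxOf (f v), hi⟩ = f v := List.idxOf_get hi
      have hi1 : es₀.idxOf (f v) + 1 < es₀.length := by
        rcases Nat.lt_or_ge (es₀.idxOf (f v) + 1) es₀.length with h | h
        · exact h
        · exfalso
          apply hwr
          have hL : es₀.getLast h₀ne = f v := by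
            rw [← hget, List.getLast_eq_getElem, List.get_eq_getElem]
            congr 1
            show es₀.length - 1 = es₀.idxOf (f v)
            omega
          have := h₀end
          rw [List.getLast?_eq_getLast_of_ne_nil h₀ne] at this
          simp only [Option.map_some, Option.some.injEq] at this
          rw [← hL]; exact this
      have hchainstep : hd (es₀.get ⟨es₀.idxOf (f v), hi⟩)
          = tl (es₀.get ⟨es₀.idxOf (f v) + 1, hi1⟩) :=
        List.isChain_iff_getElem.1 h₀chain _ (by omega)
      have htl' : tl (es₀.get ⟨es₀.idxOf (f v) + 1, hi1⟩) = hd (f v) := by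
        rw [← hchainstep, hget]
      have hmem' : es₀.get ⟨es₀.idxOf (f v) + 1, hi1⟩ ∈ es₀ := List.get_mem _ _
      have hidx := (hf (hd (f v)) hwr).2 _ hmem' htl'
      have hidx2 : es₀.idxOf (es₀.get ⟨es₀.idxOf (f v) + 1, hi1⟩) = es₀.idxOf (f v) + 1 := by
        have hlt : es₀.idxOf (es₀.get ⟨es₀.idxOf (f v) + 1, hi1⟩) < es₀.length :=
          List.idxOf_lt_length_iff.2 hmem'
        have hg2 : es₀.get ⟨_, hlt⟩ = es₀.get ⟨es₀.idxOf (f v) + 1, hi1⟩ :=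
          List.idxOf_get hlt
        have := List.nodup_iff_injective_get.1 h₀nodup hg2
        exact congrArg Fin.val this
      rw [hidx2] at hidx
      exact ih (hd (f v)) hwr hfw (by omega)
  refine ⟨?_, fun _ => hendlast⟩
  intro e
  by_contra hne
  have hvr : tl e ≠ r := fun h => hne (hAllOut_r e h)
  exact key es₀.length (tl e) hvr (claimB _ hvr ⟨e, rfl, hne⟩) (Nat.sub_le _ _)
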